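/- The map g_a restricts to a bijection from a subset of B(0, 2/(11‖a‖)) onto a set containing the closed ball of radius 1/(11‖a‖): for every b̃ ∈ B with ‖b̃‖ ≤ 1/(11‖a‖) there exists a unique b ∈ B with ‖b‖ ≤ 2/(11‖a‖) such that g_a(b) = b̃. -/

import Mathlib

set_option maxHeartbeats 1000000


/-- `g_a(b) = b ⬝ E((1 - ab)⁻¹)`. -/
noncomputable def gA {A : Type*} [NormedRing A] [NormedAlgebra ℂ A] [CompleteSpace A]
    (E : A →L[ℂ] A) (a b : A) : A :=
  b * E (Ring.inverse (1 - a * b))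

lemma aux_inv {A : Type*} [NormedRing A] [CompleteSpace A] (x : A) (hx : ‖x‖ ≤ 2 / 11) :
    Ring.inverse (1 - x) * (1 - x) = 1 ∧ (1 - x) * Ring.inverse (1 - x) = 1 ∧
      ‖Ring.inverse (1 - x) - 1‖ ≤ 2 / 9 := by
  have hx1 : ‖x‖ < 1 := lt_of_le_of_lt hx (by norm_num)
  have hu : IsUnit (1 - x) := isUnit_one_sub_of_norm_lt_one hx1
  refine ⟨Ring.inverse_mul_cancel _ hu, Ring.mul_inverse_cancel _ hu, ?_⟩
  rw [← geom_series_eq_inverse x hx1, ← geom_series_succ x hx1]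
  have hg : Summable (fun i : ℕ => ‖x‖ ^ (i + 1)) := by
    simpa [pow_succ'] using
      (summable_geometric_of_lt_one (norm_nonneg x) hx1).mul_left ‖x‖
  have hle : ∀ i : ℕ, ‖x ^ (i + 1)‖ ≤ ‖x‖ ^ (i + 1) := fun i =>
    norm_pow_le' x (Nat.succ_pos i)
  have hsn : Summable (fun i : ℕ => ‖x ^ (i + 1)‖) :=
    Summable.of_nonneg_of_le (fun i => norm_nonneg _) hle hg
  have h1 : ‖∑' i : ℕ, x ^ (i + 1)‖ ≤ ∑' i : ℕ, ‖x ^ (i + 1)‖ :=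
    norm_tsum_le_tsum_norm hsn
  have h2 : ∑' i : ℕ, ‖x ^ (i + 1)‖ ≤ ∑' i : ℕ, ‖x‖ ^ (i + 1) :=
    Summable.tsum_le_tsum hle hsn hg
  have h3 : ∑' i : ℕ, ‖x‖ ^ (i + 1) = ‖x‖ * (1 - ‖x‖)⁻¹ := by
    rw [← tsum_geometric_of_lt_one (norm_nonneg x) hx1,
      ← (summable_geometric_of_lt_one (norm_nonneg x) hx1).tsum_mul_left]
    simp [pow_succ']
  have h4 : ‖x‖ * (1 - ‖x‖)⁻¹ ≤ 2 / 9 := by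
    have h9 : (0 : ℝ) < 1 - ‖x‖ := by linarith
    rw [← div_eq_mul_inv, div_le_iff₀ h9]
    linarith
  linarith

theorem stmt5 {A : Type*} [NormedRing A] [NormedAlgebra ℂ A] [CompleteSpace A]
    (B : Subalgebra ℂ A) (hB : IsClosed (B : Set A))
    (E : A →L[ℂ] A) (hrange : ∀ x : A, E x ∈ B) (hfix : ∀ x ∈ B, E x = x)
    (hnorm : ∀ x : A, ‖E x‖ ≤ ‖x‖)
    (hbimod : ∀ b₁ ∈ B, ∀ b₂ ∈ B, ∀ x : A, E (b₁ * x * b₂) = b₁ * E x * b₂)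
    (a : A) (ha : a ≠ 0)
    (bt : A) (hbtB : bt ∈ B) (hbt : ‖bt‖ ≤ 1 / (11 * ‖a‖)) :
    ∃! b : A, b ∈ B ∧ ‖b‖ ≤ 2 / (11 * ‖a‖) ∧ gA E a b = bt := by
  have haA : (0 : ℝ) < ‖a‖ := norm_pos_iff.mpr ha
  set R : ℝ := 2 / (11 * ‖a‖) with hR
  have hRpos : 0 < R := by positivity
  have haR : ‖a‖ * R = 2 / 11 := by
    rw [hR]; field_simp
  have hab : ∀ b : A, ‖b‖ ≤ R → ‖a * b‖ ≤ 2 / 11 := by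
    intro b hb
    calc ‖a * b‖ ≤ ‖a‖ * ‖b‖ := norm_mul_le _ _
      _ ≤ ‖a‖ * R := by nlinarith
      _ = 2 / 11 := haR
  have E1 : E 1 = 1 := hfix 1 B.one_mem
  set T : A → A := fun b => bt - b * (E (Ring.inverse (1 - a * b)) - 1) with hTdef
  have hT : ∀ b : A, gA E a b = bt + b - T b := by
    intro b
    simp only [gA, hTdef]
    noncomm_ring
  have hEb : ∀ b : A, ‖b‖ ≤ R → ‖E (Ring.inverse (1 - a * b)) - 1‖ ≤ 2 / 9 := by
    intro b hb
    have he : E (Ring.inverse (1 - a * b)) - 1 = E (Ring.inverse (1 - a * b) - 1) := by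
      rw [map_sub, E1]
    rw [he]
    exact le_trans (hnorm _) (aux_inv (a * b) (hab b hb)).2.2
  have hTB : ∀ b ∈ B, T b ∈ B := by
    intro b hb
    exact sub_mem hbtB (mul_mem hb (sub_mem (hrange _) B.one_mem))
  have hTnorm : ∀ b : A, ‖b‖ ≤ R → ‖T b‖ ≤ R := by
    intro b hb
    have h1 : ‖T b‖ ≤ ‖bt‖ + ‖b * (E (Ring.inverse (1 - a * b)) - 1)‖ := norm_sub_le _ _
    have h2 : ‖b * (E (Ring.inverse (1 - a * b)) - 1)‖ ≤ ‖b‖ * ‖E (Ring.inverse (1 - a * b)) - 1‖ :=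
      norm_mul_le _ _
    have h3 := hEb b hb
    have h4 : ‖b‖ * ‖E (Ring.inverse (1 - a * b)) - 1‖ ≤ R * (2 / 9) := by
      have := norm_nonneg b
      have := norm_nonneg (E (Ring.inverse (1 - a * b)) - 1)
      nlinarith
    have hbtR : ‖bt‖ ≤ R / 2 := by
      have h5 : R / 2 = 1 / (11 * ‖a‖) := by rw [hR]; ring
      linarith [hbt, h5.ge]
    linarith
  have hcontr : ∀ b b' : A, ‖b‖ ≤ R → ‖b'‖ ≤ R →
      ‖T b - T b'‖ ≤ 40 / 81 * ‖b - b'‖ := by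
    intro b b' hb hb'
    set y : A := Ring.inverse (1 - a * b) with hy
    set y' : A := Ring.inverse (1 - a * b') with hy'
    obtain ⟨hyl, hyr, hys⟩ := aux_inv (a * b) (hab b hb)
    obtain ⟨hyl', hyr', hys'⟩ := aux_inv (a * b') (hab b' hb')
    have hid : y' - y = y' * (a * (b' - b)) * y := by
      have e1 : y' * ((1 - a * b) * y) = y' := by rw [hyr, mul_one]
      have e2 : y' * (1 - a * b') * y = y := by rw [hyl', one_mul]
      calc y' - y = y' * ((1 - a * b) * y) - y' * (1 - a * b') * y := by rw [e1, e2]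
        _ = y' * (a * (b' - b)) * y := by noncomm_ring
    have hyy : ‖y' - y‖ ≤ 121 / 81 * (‖a‖ * ‖b - b'‖) := by
      have hz : ‖a * (b' - b)‖ ≤ ‖a‖ * ‖b - b'‖ := by
        calc ‖a * (b' - b)‖ ≤ ‖a‖ * ‖b' - b‖ := norm_mul_le _ _
          _ = ‖a‖ * ‖b - b'‖ := by rw [norm_sub_rev]
      set z : A := a * (b' - b) with hzdef
      have hexp : y' * z * y = z + (y' - 1) * z + z * (y - 1) + (y' - 1) * (z * (y - 1)) := by
        noncomm_ring
      rw [hid, hexp]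
      have n1 : ‖(y' - 1) * z‖ ≤ (2 / 9) * ‖z‖ := by
        calc ‖(y' - 1) * z‖ ≤ ‖y' - 1‖ * ‖z‖ := norm_mul_le _ _
          _ ≤ (2 / 9) * ‖z‖ := by nlinarith [norm_nonneg z]
      have n2 : ‖z * (y - 1)‖ ≤ ‖z‖ * (2 / 9) := by
        calc ‖z * (y - 1)‖ ≤ ‖z‖ * ‖y - 1‖ := norm_mul_le _ _
          _ ≤ ‖z‖ * (2 / 9) := by nlinarith [norm_nonneg z]
      have n3 : ‖(y' - 1) * (z * (y - 1))‖ ≤ (2 / 9) * (‖z‖ * (2 / 9)) := by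
        calc ‖(y' - 1) * (z * (y - 1))‖ ≤ ‖y' - 1‖ * ‖z * (y - 1)‖ := norm_mul_le _ _
          _ ≤ (2 / 9) * (‖z‖ * (2 / 9)) := by
              nlinarith [norm_nonneg (z * (y - 1)), norm_nonneg z, norm_nonneg (y' - 1)]
      have ntot : ‖z + (y' - 1) * z + z * (y - 1) + (y' - 1) * (z * (y - 1))‖ ≤
          ‖z‖ + ‖(y' - 1) * z‖ + ‖z * (y - 1)‖ + ‖(y' - 1) * (z * (y - 1))‖ := by
        calc ‖z + (y' - 1) * z + z * (y - 1) + (y' - 1) * (z * (y - 1))‖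
            ≤ ‖z + (y' - 1) * z + z * (y - 1)‖ + ‖(y' - 1) * (z * (y - 1))‖ := norm_add_le _ _
          _ ≤ ‖z + (y' - 1) * z‖ + ‖z * (y - 1)‖ + ‖(y' - 1) * (z * (y - 1))‖ := by
              linarith [norm_add_le (z + (y' - 1) * z) (z * (y - 1))]
          _ ≤ ‖z‖ + ‖(y' - 1) * z‖ + ‖z * (y - 1)‖ + ‖(y' - 1) * (z * (y - 1))‖ := by
              linarith [norm_add_le z ((y' - 1) * z)]
      nlinarith [norm_nonneg z]
    have hsplit : T b - T b' = (b' - b) * (E y' - 1) + b * E (y' - y) := by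
      rw [map_sub]
      simp only [hTdef, hy, hy']
      noncomm_ring
    rw [hsplit]
    have m1 : ‖(b' - b) * (E y' - 1)‖ ≤ ‖b - b'‖ * (2 / 9) := by
      calc ‖(b' - b) * (E y' - 1)‖ ≤ ‖b' - b‖ * ‖E y' - 1‖ := norm_mul_le _ _
        _ = ‖b - b'‖ * ‖E y' - 1‖ := by rw [norm_sub_rev]
        _ ≤ ‖b - b'‖ * (2 / 9) := by
            have := hEb b' hb'
            nlinarith [norm_nonneg (b - b')]
    have m2 : ‖b * E (y' - y)‖ ≤ 22 / 81 * ‖b - b'‖ := by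
      have h5 : ‖E (y' - y)‖ ≤ 121 / 81 * (‖a‖ * ‖b - b'‖) := le_trans (hnorm _) hyy
      calc ‖b * E (y' - y)‖ ≤ ‖b‖ * ‖E (y' - y)‖ := norm_mul_le _ _
        _ ≤ R * (121 / 81 * (‖a‖ * ‖b - b'‖)) := by
            nlinarith [norm_nonneg b, norm_nonneg (E (y' - y)), norm_nonneg (b - b'), hRpos.le]
        _ = 121 / 81 * (‖a‖ * R) * ‖b - b'‖ := by ring
        _ = 22 / 81 * ‖b - b'‖ := by rw [haR]; ring
    calc ‖(b' - b) * (E y' - 1) + b * E (y' - y)‖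
        ≤ ‖(b' - b) * (E y' - 1)‖ + ‖b * E (y' - y)‖ := norm_add_le _ _
      _ ≤ 40 / 81 * ‖b - b'‖ := by linarith
  -- set up the fixed point argument on the closed subset
  set S : Set A := {b : A | b ∈ B ∧ ‖b‖ ≤ R} with hSdef
  have hScl : IsClosed S := by
    have hEq : S = (B : Set A) ∩ {b : A | ‖b‖ ≤ R} := rfl
    rw [hEq]
    exact hB.inter (isClosed_le continuous_norm continuous_const)
  haveI : CompleteSpace S := hScl.completeSpace_coe
  haveI : Nonempty S := ⟨⟨0, B.zero_mem, by simpa using hRpos.le⟩⟩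
  set f : S → S := fun b => ⟨T b.1, hTB _ b.2.1, hTnorm _ b.2.2⟩ with hfdef
  have hf : ContractingWith (⟨40 / 81, by norm_num⟩ : NNReal) f := by
    constructor
    · exact NNReal.coe_lt_coe.mp (show (40 / 81 : ℝ) < 1 by norm_num)
    · apply LipschitzWith.of_dist_le_mul
      intro x y
      rw [Subtype.dist_eq, Subtype.dist_eq, dist_eq_norm, dist_eq_norm]
      exact hcontr x.1 y.1 x.2.2 y.2.2
  set b₀ : S := ContractingWith.fixedPoint f hf with hb₀
  have hfixpt : f b₀ = b₀ := hf.fixedPoint_isFixedPt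
  have hfixv : T b₀.1 = b₀.1 := congrArg Subtype.val hfixpt
  refine ⟨b₀.1, ⟨b₀.2.1, b₀.2.2, ?_⟩, ?_⟩
  · rw [hT, hfixv]; abel
  · rintro c ⟨hcB, hcN, hgc⟩
    have hTc : T c = c := by
      have h := hT c
      rw [hgc, add_sub_assoc] at h
      exact (sub_eq_zero.mp (left_eq_add.mp h)).symm
    have h := hcontr c b₀.1 hcN b₀.2.2
    rw [hTc, hfixv] at h
    have h0 : ‖c - b₀.1‖ = 0 := by
      have := norm_nonneg (c - b₀.1)
      linarith
    have := sub_eq_zero.mp (norm_eq_zero.mp h0)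
    exact this
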